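/- In the Suslov problem with b = 0 and I₁₃ = 0, I₁₁I₂₂ = I₂₂² + I₂₃² (the case n = 1), the first integral F₂ = I₁₁γ₁ω₁ + (I₂₂γ₂ + I₂₃γ₃)ω₂ has vanishing time derivative along all solutions of the full Suslov system. -/

import Mathlib

/-- In the Suslov problem with `b = 0`, `I₁₃ = 0`, `I₁₁I₂₂ = I₂₂² + I₂₃²`, the
function `F₂ = I₁₁γ₁ω₁ + (I₂₂γ₂ + I₂₃γ₃)ω₂` is a first integral. -/
theorem suslov_free_case_n1_integral
    (I11 I22 I23 : ℝ) (hI11 : 0 < I11) (hI22 : 0 < I22)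
    (hc : I11 * I22 = I22 ^ 2 + I23 ^ 2)
    (ω1 ω2 γ1 γ2 γ3 : ℝ → ℝ)
    (h1 : ∀ t, HasDerivAt ω1 (-ω2 t * (I23 * ω2 t) / I11) t)
    (h2 : ∀ t, HasDerivAt ω2 (ω1 t * (I23 * ω2 t) / I22) t)
    (h3 : ∀ t, HasDerivAt γ1 (-(γ3 t) * ω2 t) t)
    (h4 : ∀ t, HasDerivAt γ2 (γ3 t * ω1 t) t)
    (h5 : ∀ t, HasDerivAt γ3 (γ1 t * ω2 t - γ2 t * ω1 t) t) :
    ∀ t, HasDerivAt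
      (fun s => I11 * γ1 s * ω1 s + (I22 * γ2 s + I23 * γ3 s) * ω2 s) 0 t := by
  intro t
  have hA := (((h3 t).const_mul I11).mul (h1 t))
  have hB := ((((h4 t).const_mul I22).add ((h5 t).const_mul I23)).mul (h2 t))
  have h := hA.add hB
  have hz : (I11 * (-γ3 t * ω2 t) * ω1 t + I11 * γ1 t * (-ω2 t * (I23 * ω2 t) / I11)) +
      ((I22 * (γ3 t * ω1 t) + I23 * (γ1 t * ω2 t - γ2 t * ω1 t)) * ω2 t +
        (I22 * γ2 t + I23 * γ3 t) * (ω1 t * (I23 * ω2 t) / I22)) = 0 := by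
    field_simp
    linear_combination (-(ω2 t * γ3 t * ω1 t)) * hc
  have h' := h
  simp only [Pi.add_apply] at h'
  rw [hz] at h'
  rw [show (fun s => I11 * γ1 s * ω1 s + (I22 * γ2 s + I23 * γ3 s) * ω2 s) = (fun y => I11 * γ1 y) * ω1 + ((fun y => I22 * γ2 y) + fun y => I23 * γ3 y) * ω2 from by funext s; rfl]
  exact h'
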